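/- Let (b₁,θ₁,q₁,m₁) and (b₂,θ₂,q₂,m₂) be magnetic graphs over X₁ and X₂, let μ : X₁×X₂ → (0,∞), and let (b,θ,q,m_μ) be their product over X₁×X₂. Then for every finitely supported f : X₁×X₂ → ℂ, Q_{2,θ}(f) = Σ_{x₂∈X₂} Q_{2,θ₁}(f(·,x₂)) m₂(x₂) + Σ_{x₁∈X₁} Q_{2,θ₂}(f(x₁,·)) m₁(x₁), where Q_{2,θ₁} and Q_{2,θ₂} are the forms of the two factor graphs. -/

import Mathlib

open Complex MeasureTheory
open scoped Classical

noncomputable section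

variable {X : Type*}

/-- The structural hypotheses of a magnetic graph `(b, θ, q, m)` over `X`:
`b` is nonnegative, symmetric, has zero diagonal and summable rows; the
magnetic potential `θ` is antisymmetric modulo `2π`; the measure `m` is positive. -/
def IsMagneticGraph (b θ : X → X → ℝ) (m : X → ℝ) : Prop :=
  (∀ x y, 0 ≤ b x y) ∧ (∀ x y, b x y = b y x) ∧ (∀ x, b x x = 0) ∧
  (∀ x, Summable fun y => b x y) ∧
  (∀ x y, ∃ k : ℤ, θ x y + θ y x = 2 * Real.pi * k) ∧
  (∀ x, 0 < m x)

/-- The `p`-frustration index `ι_{p,θ}(W)` of a finite set `W`. -/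
def frust (b θ : X → X → ℝ) (p : ℝ) (W : Finset X) : ℝ :=
  sInf {r : ℝ | ∃ τ : X → ℂ, (∀ x ∈ W, ‖τ x‖ = 1) ∧
    r = (1 / 2) * ∑ x ∈ W, ∑ y ∈ W,
      b x y * ‖τ x - Complex.exp ((θ x y : ℂ) * Complex.I) * τ y‖ ^ p}

/-- The measure `b(∂W)` of the boundary `∂W = (W×(X∖W)) ∪ ((X∖W)×W)`. -/
def bBoundary (b : X → X → ℝ) (W : Finset X) : ℝ :=
  (∑ x ∈ W, ∑' y : {y : X // y ∉ W}, b x ↑y) +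
  (∑ y ∈ W, ∑' x : {x : X // x ∉ W}, b ↑x y)

/-- `(a,k)_p`-magnetic-sparseness. -/
def MagSparse (b θ : X → X → ℝ) (q m : X → ℝ) (p a k : ℝ) : Prop :=
  ∀ W : Finset X,
    (∑ x ∈ W, ∑ y ∈ W, b x y) ≤
      (1 + a) * frust b θ p W +
      a * ((1 / 2) * bBoundary b W + ∑ x ∈ W, max (q x) 0 * m x) +
      k * ∑ x ∈ W, m x

/-- The energy functional `Q_{p,θ}` on finitely supported functions. -/
def Qform (b θ : X → X → ℝ) (q m : X → ℝ) (p : ℝ) (f : X → ℂ) : ℝ :=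
  (1 / 2) * ∑' x, ∑' y, b x y * ‖f x - Complex.exp ((θ x y : ℂ) * Complex.I) * f y‖ ^ p +
  ∑' x, q x * ‖f x‖ ^ p * m x

/-- The weighted vertex degree `Deg(x) = (1/m(x)) Σ_y b(x,y) + q(x)`. -/
def Degf (b : X → X → ℝ) (q m : X → ℝ) (x : X) : ℝ :=
  (1 / m x) * ∑' y, b x y + q x

/-- The pairing `⟨Deg, |f|^p⟩ = Σ_x Deg(x) |f(x)|^p m(x)`. -/
def degPair (b : X → X → ℝ) (q m : X → ℝ) (p : ℝ) (f : X → ℂ) : ℝ :=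
  ∑' x, Degf b q m x * ‖f x‖ ^ p * m x

/-- The `p`-norm to the `p`: `‖f‖_p^p = Σ_x |f(x)|^p m(x)`. -/
def pNorm (m : X → ℝ) (p : ℝ) (f : X → ℂ) : ℝ :=
  ∑' x, ‖f x‖ ^ p * m x

/-- `q ∈ K_α^{p,θ}` with constant `C`: the negative part of `q` is form bounded. -/
def InKClass (b θ : X → X → ℝ) (q m : X → ℝ) (p α C : ℝ) : Prop :=
  ∀ f : X → ℂ, (Function.support f).Finite →
    (∑' x, max (-q x) 0 * ‖f x‖ ^ p * m x) ≤
      α * Qform b θ (fun x => max (q x) 0) m p f + C * pNorm m p f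

section Products

variable {X₁ X₂ : Type*}

/-- The edge weight of the product of two magnetic graphs:
`b(x,y) = b₁(x₁,y₁)m₂(x₂)·1_{x₂=y₂} + b₂(x₂,y₂)m₁(x₁)·1_{x₁=y₁}`. -/
def prodB (b₁ : X₁ → X₁ → ℝ) (b₂ : X₂ → X₂ → ℝ) (m₁ : X₁ → ℝ) (m₂ : X₂ → ℝ) :
    X₁ × X₂ → X₁ × X₂ → ℝ :=
  fun x y => (if x.2 = y.2 then b₁ x.1 y.1 * m₂ x.2 else 0) +
             (if x.1 = y.1 then b₂ x.2 y.2 * m₁ x.1 else 0)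

/-- The magnetic potential of the product:
`θ(x,y) = θ₁(x₁,y₁)·1_{x₂=y₂} + θ₂(x₂,y₂)·1_{x₁=y₁}`. -/
def prodTheta (θ₁ : X₁ → X₁ → ℝ) (θ₂ : X₂ → X₂ → ℝ) :
    X₁ × X₂ → X₁ × X₂ → ℝ :=
  fun x y => (if x.2 = y.2 then θ₁ x.1 y.1 else 0) +
             (if x.1 = y.1 then θ₂ x.2 y.2 else 0)

/-- The potential of the product: `q(x) = (q₁(x₁)+q₂(x₂))/μ(x)`. -/
def prodQ (q₁ : X₁ → ℝ) (q₂ : X₂ → ℝ) (μ : X₁ × X₂ → ℝ) : X₁ × X₂ → ℝ :=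
  fun x => (q₁ x.1 + q₂ x.2) / μ x

/-- The measure of the product: `m_μ(x) = μ(x)m₁(x₁)m₂(x₂)`. -/
def prodM (m₁ : X₁ → ℝ) (m₂ : X₂ → ℝ) (μ : X₁ × X₂ → ℝ) : X₁ × X₂ → ℝ :=
  fun x => μ x * m₁ x.1 * m₂ x.2

end Products


section AuxSummability

variable {Y : Type*}

lemma aux_summable_left {b : Y → Y → ℝ} (hb0 : ∀ x y, 0 ≤ b x y)
    (hrow : ∀ x, Summable (b x)) {g : Y → ℝ} (hg0 : ∀ x, 0 ≤ g x)
    (hgs : (Function.support g).Finite) :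
    Summable (fun p : Y × Y => b p.1 p.2 * g p.1) := by
  rw [summable_prod_of_nonneg (fun p => mul_nonneg (hb0 _ _) (hg0 _))]
  refine ⟨fun x => (hrow x).mul_right (g x), ?_⟩
  apply summable_of_finite_support
  apply hgs.subset
  intro x hx
  simp only [Function.mem_support] at hx ⊢
  intro h0
  exact hx (by simp [h0])

lemma aux_summable_right {b : Y → Y → ℝ} (hb0 : ∀ x y, 0 ≤ b x y)
    (hbs : ∀ x y, b x y = b y x) (hrow : ∀ x, Summable (b x)) {g : Y → ℝ}
    (hg0 : ∀ x, 0 ≤ g x) (hgs : (Function.support g).Finite) :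
    Summable (fun p : Y × Y => b p.1 p.2 * g p.2) := by
  rw [summable_prod_of_nonneg (fun p => mul_nonneg (hb0 _ _) (hg0 _))]
  constructor
  · intro x
    apply summable_of_finite_support
    apply hgs.subset
    intro y hy
    simp only [Function.mem_support] at hy ⊢
    intro h0
    exact hy (by simp [h0])
  · have key : ∀ x, (∑' y, b x y * g y) = ∑ y ∈ hgs.toFinset, b x y * g y := by
      intro x
      apply tsum_eq_sum
      intro y hy
      have : g y = 0 := by
        by_contra hgy
        exact hy (hgs.mem_toFinset.2 hgy)
      simp [this]
    rw [show (fun x => ∑' y, b x y * g y) = fun x => ∑ y ∈ hgs.toFinset, b x y * g y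
      from funext key]
    apply summable_sum
    intro y _
    exact ((hrow y).congr (fun x => hbs y x)).mul_right (g y)

lemma aux_summable_K {b E : Y → Y → ℝ} {g : Y → ℝ}
    (hb0 : ∀ x y, 0 ≤ b x y) (hbs : ∀ x y, b x y = b y x) (hrow : ∀ x, Summable (b x))
    (hg0 : ∀ x, 0 ≤ g x) (hgs : (Function.support g).Finite)
    (hE0 : ∀ x y, 0 ≤ E x y) (hE : ∀ x y, E x y ≤ g x + g y) :
    Summable (fun p : Y × Y => b p.1 p.2 * E p.1 p.2) := by
  refine Summable.of_nonneg_of_le (fun p => mul_nonneg (hb0 _ _) (hE0 _ _)) (fun p => ?_)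
    ((aux_summable_left hb0 hrow hg0 hgs).add (aux_summable_right hb0 hbs hrow hg0 hgs))
  calc b p.1 p.2 * E p.1 p.2 ≤ b p.1 p.2 * (g p.1 + g p.2) :=
        mul_le_mul_of_nonneg_left (hE _ _) (hb0 _ _)
    _ = b p.1 p.2 * g p.1 + b p.1 p.2 * g p.2 := mul_add _ _ _

end AuxSummability

section ProductTheorems

variable {X₁ X₂ : Type*} [Countable X₁] [Countable X₂]

set_option maxHeartbeats 4000000 in
/-- the form of the product graph decomposes as
`Q_{2,θ}(f) = Σ_{x₂} Q_{2,θ₁}(f(·,x₂)) m₂(x₂) + Σ_{x₁} Q_{2,θ₂}(f(x₁,·)) m₁(x₁)`. -/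
theorem Qform_prod
    (b₁ θ₁ : X₁ → X₁ → ℝ) (q₁ m₁ : X₁ → ℝ) (hG₁ : IsMagneticGraph b₁ θ₁ m₁)
    (b₂ θ₂ : X₂ → X₂ → ℝ) (q₂ m₂ : X₂ → ℝ) (hG₂ : IsMagneticGraph b₂ θ₂ m₂)
    (μ : X₁ × X₂ → ℝ) (hμ : ∀ z, 0 < μ z)
    (f : X₁ × X₂ → ℂ) (hf : (Function.support f).Finite) :
    Qform (prodB b₁ b₂ m₁ m₂) (prodTheta θ₁ θ₂) (prodQ q₁ q₂ μ) (prodM m₁ m₂ μ) 2 f =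
      (∑' x₂ : X₂, Qform b₁ θ₁ q₁ m₁ 2 (fun x₁ => f (x₁, x₂)) * m₂ x₂) +
      (∑' x₁ : X₁, Qform b₂ θ₂ q₂ m₂ 2 (fun x₂ => f (x₁, x₂)) * m₁ x₁) := by
  classical
  obtain ⟨hb10, hb1s, hb1d, hb1r, -, hm1⟩ := hG₁
  obtain ⟨hb20, hb2s, hb2d, hb2r, -, hm2⟩ := hG₂
  simp only [Qform, Real.rpow_two]
  have hexp : ∀ t : ℝ, ‖Complex.exp ((t : ℂ) * Complex.I)‖ = 1 := by
    intro t
    simp [Complex.norm_exp]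
  have hE0 : ∀ x y : X₁ × X₂, 0 ≤ ‖f x - Complex.exp ((prodTheta θ₁ θ₂ x y : ℂ) * Complex.I) * f y‖ ^ 2 :=
    fun x y => pow_nonneg (norm_nonneg _) 2
  set g : X₁ × X₂ → ℝ := fun x => 2 * ‖f x‖ ^ 2 with hgdef
  have hg0 : ∀ x, 0 ≤ g x := fun x => by positivity
  have hgs : (Function.support g).Finite := by
    apply hf.subset
    intro x hx
    simp only [Function.mem_support, hgdef] at hx ⊢
    intro h0
    exact hx (by simp [h0])
  have hEle : ∀ x y : X₁ × X₂, ‖f x - Complex.exp ((prodTheta θ₁ θ₂ x y : ℂ) * Complex.I) * f y‖ ^ 2 ≤ g x + g y := by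
    intro x y
    have h1 : ‖f x - Complex.exp ((prodTheta θ₁ θ₂ x y : ℂ) * Complex.I) * f y‖ ≤ ‖f x‖ + ‖f y‖ := by
      refine (norm_sub_le _ _).trans ?_
      rw [norm_mul, hexp, one_mul]
    simp only [hgdef]
    nlinarith [sq_nonneg (‖f x‖ - ‖f y‖), norm_nonneg (f x), norm_nonneg (f y),
      norm_nonneg (f x - Complex.exp ((prodTheta θ₁ θ₂ x y : ℂ) * Complex.I) * f y)]
  have hB0 : ∀ x y : X₁ × X₂, 0 ≤ prodB b₁ b₂ m₁ m₂ x y := by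
    intro x y
    simp only [prodB]
    refine add_nonneg ?_ ?_ <;> split_ifs <;>
      first
        | exact mul_nonneg (hb10 _ _) (hm2 _).le
        | exact mul_nonneg (hb20 _ _) (hm1 _).le
        | exact le_rfl
  have hBsym : ∀ x y : X₁ × X₂, prodB b₁ b₂ m₁ m₂ x y = prodB b₁ b₂ m₁ m₂ y x := by
    intro x y
    simp only [prodB]
    congr 1
    · by_cases h : x.2 = y.2
      · rw [if_pos h, if_pos h.symm, hb1s, h]
      · rw [if_neg h, if_neg (fun h' => h h'.symm)]
    · by_cases h : x.1 = y.1
      · rw [if_pos h, if_pos h.symm, hb2s, h]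
      · rw [if_neg h, if_neg (fun h' => h h'.symm)]
  have hinj1 : ∀ c : X₂, Function.Injective (fun y₁ : X₁ => (y₁, c)) :=
    fun c a b h => congrArg Prod.fst h
  have hinj2 : ∀ c : X₁, Function.Injective (fun y₂ : X₂ => (c, y₂)) :=
    fun c a b h => congrArg Prod.snd h
  have hBrow : ∀ x : X₁ × X₂, Summable (prodB b₁ b₂ m₁ m₂ x) := by
    intro x
    have hBx : prodB b₁ b₂ m₁ m₂ x = fun y => (if x.2 = y.2 then b₁ x.1 y.1 * m₂ x.2 else 0) +
        (if x.1 = y.1 then b₂ x.2 y.2 * m₁ x.1 else 0) := rfl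
    rw [hBx]
    apply Summable.add
    · rw [← Function.Injective.summable_iff (hinj1 x.2)]
      · simpa [Function.comp_def] using (hb1r x.1).mul_right (m₂ x.2)
      · intro y hy
        rw [if_neg]
        intro h
        exact hy ⟨y.1, Prod.ext_iff.2 ⟨rfl, h⟩⟩
    · rw [← Function.Injective.summable_iff (hinj2 x.1)]
      · simpa [Function.comp_def] using (hb2r x.2).mul_right (m₁ x.1)
      · intro y hy
        rw [if_neg]
        intro h
        exact hy ⟨y.2, Prod.ext_iff.2 ⟨h, rfl⟩⟩
  have hK : Summable (fun p : (X₁ × X₂) × (X₁ × X₂) =>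
      prodB b₁ b₂ m₁ m₂ p.1 p.2 *
        ‖f p.1 - Complex.exp ((prodTheta θ₁ θ₂ p.1 p.2 : ℂ) * Complex.I) * f p.2‖ ^ 2) :=
    aux_summable_K hB0 hBsym hBrow hg0 hgs hE0 hEle
  set G₁ : X₁ × X₂ → X₁ × X₂ → ℝ :=
    fun x y => (if x.2 = y.2 then b₁ x.1 y.1 * m₂ x.2 else 0) * ‖f x - Complex.exp ((prodTheta θ₁ θ₂ x y : ℂ) * Complex.I) * f y‖ ^ 2 with hG1def
  set G₂ : X₁ × X₂ → X₁ × X₂ → ℝ :=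
    fun x y => (if x.1 = y.1 then b₂ x.2 y.2 * m₁ x.1 else 0) * ‖f x - Complex.exp ((prodTheta θ₁ θ₂ x y : ℂ) * Complex.I) * f y‖ ^ 2 with hG2def
  have hsplit : ∀ x y : X₁ × X₂, prodB b₁ b₂ m₁ m₂ x y * ‖f x - Complex.exp ((prodTheta θ₁ θ₂ x y : ℂ) * Complex.I) * f y‖ ^ 2 = G₁ x y + G₂ x y := by
    intro x y
    simp only [hG1def, hG2def, prodB]
    ring
  have hG10 : ∀ p : (X₁ × X₂) × (X₁ × X₂), 0 ≤ G₁ p.1 p.2 := by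
    intro p
    simp only [hG1def]
    refine mul_nonneg ?_ (hE0 _ _)
    split_ifs
    · exact mul_nonneg (hb10 _ _) (hm2 _).le
    · exact le_rfl
  have hG20 : ∀ p : (X₁ × X₂) × (X₁ × X₂), 0 ≤ G₂ p.1 p.2 := by
    intro p
    simp only [hG2def]
    refine mul_nonneg ?_ (hE0 _ _)
    split_ifs
    · exact mul_nonneg (hb20 _ _) (hm1 _).le
    · exact le_rfl
  have hG1sum : Summable (fun p : (X₁ × X₂) × (X₁ × X₂) => G₁ p.1 p.2) := by
    refine Summable.of_nonneg_of_le hG10 (fun p => ?_) hK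
    rw [hsplit]
    exact le_add_of_nonneg_right (hG20 p)
  have hG2sum : Summable (fun p : (X₁ × X₂) × (X₁ × X₂) => G₂ p.1 p.2) := by
    refine Summable.of_nonneg_of_le hG20 (fun p => ?_) hK
    rw [hsplit]
    exact le_add_of_nonneg_left (hG10 p)
  obtain ⟨hG1row, hG1col⟩ := (summable_prod_of_nonneg
    (f := fun p : (X₁ × X₂) × (X₁ × X₂) => G₁ p.1 p.2) hG10).1 hG1sum
  obtain ⟨hG2row, hG2col⟩ := (summable_prod_of_nonneg
    (f := fun p : (X₁ × X₂) × (X₁ × X₂) => G₂ p.1 p.2) hG20).1 hG2sum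
  have hinner1 : ∀ x : X₁ × X₂, (∑' y, G₁ x y) =
      (∑' y₁, b₁ x.1 y₁ *
        ‖f (x.1, x.2) - Complex.exp ((θ₁ x.1 y₁ : ℂ) * Complex.I) * f (y₁, x.2)‖ ^ 2) * m₂ x.2 := by
    intro x
    have hsupp : Function.support (fun y => G₁ x y) ⊆ Set.range (fun y₁ : X₁ => (y₁, x.2)) := by
      intro y hy
      simp only [Function.mem_support, hG1def] at hy
      by_contra hr
      apply hy
      rw [if_neg, zero_mul]
      intro h
      exact hr ⟨y.1, Prod.ext_iff.2 ⟨rfl, h⟩⟩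
    rw [← Function.Injective.tsum_eq (hinj1 x.2) hsupp, ← tsum_mul_right]
    refine tsum_congr fun y₁ => ?_
    simp only [hG1def, if_true]
    by_cases h : x.1 = y₁
    · rw [← h, hb1d]
      simp
    · have hth : prodTheta θ₁ θ₂ x (y₁, x.2) = θ₁ x.1 y₁ := by
        simp [prodTheta, h]
      rw [hth]
      simp only [Prod.mk.eta]
      ring
  have hinner2 : ∀ x : X₁ × X₂, (∑' y, G₂ x y) =
      (∑' y₂, b₂ x.2 y₂ *
        ‖f (x.1, x.2) - Complex.exp ((θ₂ x.2 y₂ : ℂ) * Complex.I) * f (x.1, y₂)‖ ^ 2) * m₁ x.1 := by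
    intro x
    have hsupp : Function.support (fun y => G₂ x y) ⊆ Set.range (fun y₂ : X₂ => (x.1, y₂)) := by
      intro y hy
      simp only [Function.mem_support, hG2def] at hy
      by_contra hr
      apply hy
      rw [if_neg, zero_mul]
      intro h
      exact hr ⟨y.2, Prod.ext_iff.2 ⟨h, rfl⟩⟩
    rw [← Function.Injective.tsum_eq (hinj2 x.1) hsupp, ← tsum_mul_right]
    refine tsum_congr fun y₂ => ?_
    simp only [hG2def, if_true]
    by_cases h : x.2 = y₂
    · rw [← h, hb2d]
      simp
    · have hth : prodTheta θ₁ θ₂ x (x.1, y₂) = θ₂ x.2 y₂ := by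
        simp [prodTheta, h]
      rw [hth]
      simp only [Prod.mk.eta]
      ring
  have houter1 : (∑' x : X₁ × X₂, ∑' y, G₁ x y) =
      ∑' x₂ : X₂, (∑' x₁ : X₁, ∑' y₁, b₁ x₁ y₁ *
        ‖f (x₁, x₂) - Complex.exp ((θ₁ x₁ y₁ : ℂ) * Complex.I) * f (y₁, x₂)‖ ^ 2) * m₂ x₂ := by
    have hWsum : Summable (fun x : X₁ × X₂ =>
        (∑' y₁, b₁ x.1 y₁ *
          ‖f (x.1, x.2) - Complex.exp ((θ₁ x.1 y₁ : ℂ) * Complex.I) * f (y₁, x.2)‖ ^ 2) * m₂ x.2) :=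
      hG1col.congr hinner1
    have hswap : Summable (fun z : X₂ × X₁ =>
        (∑' y₁, b₁ z.2 y₁ *
          ‖f (z.2, z.1) - Complex.exp ((θ₁ z.2 y₁ : ℂ) * Complex.I) * f (y₁, z.1)‖ ^ 2) * m₂ z.1) :=
      (Equiv.prodComm X₂ X₁).summable_iff.2 hWsum
    calc (∑' x : X₁ × X₂, ∑' y, G₁ x y)
        = ∑' x : X₁ × X₂, (∑' y₁, b₁ x.1 y₁ *
            ‖f (x.1, x.2) - Complex.exp ((θ₁ x.1 y₁ : ℂ) * Complex.I) * f (y₁, x.2)‖ ^ 2) * m₂ x.2 :=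
          tsum_congr hinner1
      _ = ∑' z : X₂ × X₁, (∑' y₁, b₁ z.2 y₁ *
            ‖f (z.2, z.1) - Complex.exp ((θ₁ z.2 y₁ : ℂ) * Complex.I) * f (y₁, z.1)‖ ^ 2) * m₂ z.1 :=
          ((Equiv.prodComm X₂ X₁).tsum_eq _).symm
      _ = ∑' x₂ : X₂, ∑' x₁ : X₁, (∑' y₁, b₁ x₁ y₁ *
            ‖f (x₁, x₂) - Complex.exp ((θ₁ x₁ y₁ : ℂ) * Complex.I) * f (y₁, x₂)‖ ^ 2) * m₂ x₂ :=
          Summable.tsum_prod' hswap (fun x₂ => hswap.prod_factor x₂)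
      _ = _ := tsum_congr fun x₂ => tsum_mul_right
  have houter2 : (∑' x : X₁ × X₂, ∑' y, G₂ x y) =
      ∑' x₁ : X₁, (∑' x₂ : X₂, ∑' y₂, b₂ x₂ y₂ *
        ‖f (x₁, x₂) - Complex.exp ((θ₂ x₂ y₂ : ℂ) * Complex.I) * f (x₁, y₂)‖ ^ 2) * m₁ x₁ := by
    have hWsum : Summable (fun x : X₁ × X₂ =>
        (∑' y₂, b₂ x.2 y₂ *
          ‖f (x.1, x.2) - Complex.exp ((θ₂ x.2 y₂ : ℂ) * Complex.I) * f (x.1, y₂)‖ ^ 2) * m₁ x.1) :=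
      hG2col.congr hinner2
    calc (∑' x : X₁ × X₂, ∑' y, G₂ x y)
        = ∑' x : X₁ × X₂, (∑' y₂, b₂ x.2 y₂ *
            ‖f (x.1, x.2) - Complex.exp ((θ₂ x.2 y₂ : ℂ) * Complex.I) * f (x.1, y₂)‖ ^ 2) * m₁ x.1 :=
          tsum_congr hinner2
      _ = ∑' x₁ : X₁, ∑' x₂ : X₂, (∑' y₂, b₂ x₂ y₂ *
            ‖f (x₁, x₂) - Complex.exp ((θ₂ x₂ y₂ : ℂ) * Complex.I) * f (x₁, y₂)‖ ^ 2) * m₁ x₁ :=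
          Summable.tsum_prod' hWsum (fun x₁ => hWsum.prod_factor x₁)
      _ = _ := tsum_congr fun x₁ => tsum_mul_right
  have hedge : (∑' x : X₁ × X₂, ∑' y : X₁ × X₂, prodB b₁ b₂ m₁ m₂ x y * ‖f x - Complex.exp ((prodTheta θ₁ θ₂ x y : ℂ) * Complex.I) * f y‖ ^ 2) =
      (∑' x₂ : X₂, (∑' x₁ : X₁, ∑' y₁, b₁ x₁ y₁ *
        ‖f (x₁, x₂) - Complex.exp ((θ₁ x₁ y₁ : ℂ) * Complex.I) * f (y₁, x₂)‖ ^ 2) * m₂ x₂) +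
      (∑' x₁ : X₁, (∑' x₂ : X₂, ∑' y₂, b₂ x₂ y₂ *
        ‖f (x₁, x₂) - Complex.exp ((θ₂ x₂ y₂ : ℂ) * Complex.I) * f (x₁, y₂)‖ ^ 2) * m₁ x₁) := by
    calc (∑' x : X₁ × X₂, ∑' y : X₁ × X₂, prodB b₁ b₂ m₁ m₂ x y * ‖f x - Complex.exp ((prodTheta θ₁ θ₂ x y : ℂ) * Complex.I) * f y‖ ^ 2)
        = ∑' x : X₁ × X₂, ((∑' y, G₁ x y) + ∑' y, G₂ x y) := by
          refine tsum_congr fun x => ?_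
          rw [← Summable.tsum_add (hG1row x) (hG2row x)]
          exact tsum_congr fun y => hsplit x y
      _ = (∑' x : X₁ × X₂, ∑' y, G₁ x y) + ∑' x : X₁ × X₂, ∑' y, G₂ x y :=
          Summable.tsum_add hG1col hG2col
      _ = _ := by rw [houter1, houter2]
  have hqpt : ∀ x : X₁ × X₂, prodQ q₁ q₂ μ x * ‖f x‖ ^ 2 * prodM m₁ m₂ μ x
      = q₁ x.1 * ‖f x‖ ^ 2 * m₁ x.1 * m₂ x.2 + q₂ x.2 * ‖f x‖ ^ 2 * m₂ x.2 * m₁ x.1 := by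
    intro x
    have hμx : μ x ≠ 0 := (hμ x).ne'
    simp only [prodQ, prodM]
    field_simp
  have hq1sum : Summable (fun x : X₁ × X₂ => q₁ x.1 * ‖f x‖ ^ 2 * m₁ x.1 * m₂ x.2) := by
    apply summable_of_finite_support
    apply hf.subset
    intro x hx
    simp only [Function.mem_support] at hx ⊢
    intro h0
    exact hx (by simp [h0])
  have hq2sum : Summable (fun x : X₁ × X₂ => q₂ x.2 * ‖f x‖ ^ 2 * m₂ x.2 * m₁ x.1) := by
    apply summable_of_finite_support
    apply hf.subset
    intro x hx
    simp only [Function.mem_support] at hx ⊢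
    intro h0
    exact hx (by simp [h0])
  have hq1sum' : Summable (fun x : X₁ × X₂ => q₁ x.1 * ‖f (x.1, x.2)‖ ^ 2 * m₁ x.1 * m₂ x.2) := by
    apply hq1sum.congr
    intro x
    simp
  have hq1swap : Summable (fun z : X₂ × X₁ => q₁ z.2 * ‖f (z.2, z.1)‖ ^ 2 * m₁ z.2 * m₂ z.1) :=
    (Equiv.prodComm X₂ X₁).summable_iff.2 hq1sum' 
  have hqpart : (∑' x : X₁ × X₂, prodQ q₁ q₂ μ x * ‖f x‖ ^ 2 * prodM m₁ m₂ μ x) =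
      (∑' x₂ : X₂, (∑' x₁ : X₁, q₁ x₁ * ‖f (x₁, x₂)‖ ^ 2 * m₁ x₁) * m₂ x₂) +
      (∑' x₁ : X₁, (∑' x₂ : X₂, q₂ x₂ * ‖f (x₁, x₂)‖ ^ 2 * m₂ x₂) * m₁ x₁) := by
    calc (∑' x : X₁ × X₂, prodQ q₁ q₂ μ x * ‖f x‖ ^ 2 * prodM m₁ m₂ μ x)
        = ∑' x : X₁ × X₂, (q₁ x.1 * ‖f x‖ ^ 2 * m₁ x.1 * m₂ x.2
            + q₂ x.2 * ‖f x‖ ^ 2 * m₂ x.2 * m₁ x.1) := tsum_congr hqpt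
      _ = (∑' x : X₁ × X₂, q₁ x.1 * ‖f x‖ ^ 2 * m₁ x.1 * m₂ x.2)
            + ∑' x : X₁ × X₂, q₂ x.2 * ‖f x‖ ^ 2 * m₂ x.2 * m₁ x.1 :=
          Summable.tsum_add hq1sum hq2sum
      _ = _ := by
          congr 1
          · calc (∑' x : X₁ × X₂, q₁ x.1 * ‖f x‖ ^ 2 * m₁ x.1 * m₂ x.2)
                = ∑' z : X₂ × X₁, q₁ z.2 * ‖f (z.2, z.1)‖ ^ 2 * m₁ z.2 * m₂ z.1 := by
                  rw [← (Equiv.prodComm X₂ X₁).tsum_eq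
                    (fun x : X₁ × X₂ => q₁ x.1 * ‖f x‖ ^ 2 * m₁ x.1 * m₂ x.2)]
                  exact tsum_congr fun z => rfl
              _ = ∑' x₂ : X₂, ∑' x₁ : X₁, q₁ x₁ * ‖f (x₁, x₂)‖ ^ 2 * m₁ x₁ * m₂ x₂ :=
                  Summable.tsum_prod' hq1swap (fun x₂ => hq1swap.prod_factor x₂)
              _ = _ := tsum_congr fun x₂ => tsum_mul_right
          · have hs : Summable (fun x : X₁ × X₂ =>
                q₂ x.2 * ‖f (x.1, x.2)‖ ^ 2 * m₂ x.2 * m₁ x.1) := by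
              apply hq2sum.congr
              intro x
              simp
            calc (∑' x : X₁ × X₂, q₂ x.2 * ‖f x‖ ^ 2 * m₂ x.2 * m₁ x.1)
                = ∑' x : X₁ × X₂, q₂ x.2 * ‖f (x.1, x.2)‖ ^ 2 * m₂ x.2 * m₁ x.1 :=
                  tsum_congr fun x => by simp
              _ = ∑' x₁ : X₁, ∑' x₂ : X₂, q₂ x₂ * ‖f (x₁, x₂)‖ ^ 2 * m₂ x₂ * m₁ x₁ :=
                  Summable.tsum_prod' hs (fun x₁ => hs.prod_factor x₁)
              _ = _ := tsum_congr fun x₁ => tsum_mul_right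
  have hD1sum : Summable (fun x₂ : X₂ => (∑' x₁ : X₁, ∑' y₁, b₁ x₁ y₁ *
      ‖f (x₁, x₂) - Complex.exp ((θ₁ x₁ y₁ : ℂ) * Complex.I) * f (y₁, x₂)‖ ^ 2) * m₂ x₂) := by
    apply summable_of_finite_support
    apply (hf.image Prod.snd).subset
    intro x₂ hx₂
    simp only [Function.mem_support] at hx₂
    by_contra hmem
    apply hx₂
    have hz : ∀ x₁, f (x₁, x₂) = 0 := by
      intro x₁
      by_contra hfx
      exact hmem ⟨(x₁, x₂), hfx, rfl⟩
    simp [hz]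
  have hD2sum : Summable (fun x₁ : X₁ => (∑' x₂ : X₂, ∑' y₂, b₂ x₂ y₂ *
      ‖f (x₁, x₂) - Complex.exp ((θ₂ x₂ y₂ : ℂ) * Complex.I) * f (x₁, y₂)‖ ^ 2) * m₁ x₁) := by
    apply summable_of_finite_support
    apply (hf.image Prod.fst).subset
    intro x₁ hx₁
    simp only [Function.mem_support] at hx₁
    by_contra hmem
    apply hx₁
    have hz : ∀ x₂, f (x₁, x₂) = 0 := by
      intro x₂
      by_contra hfx
      exact hmem ⟨(x₁, x₂), hfx, rfl⟩
    simp [hz]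
  have hP1sum : Summable (fun x₂ : X₂ => (∑' x₁ : X₁, q₁ x₁ * ‖f (x₁, x₂)‖ ^ 2 * m₁ x₁) * m₂ x₂) := by
    apply summable_of_finite_support
    apply (hf.image Prod.snd).subset
    intro x₂ hx₂
    simp only [Function.mem_support] at hx₂
    by_contra hmem
    apply hx₂
    have hz : ∀ x₁, f (x₁, x₂) = 0 := by
      intro x₁
      by_contra hfx
      exact hmem ⟨(x₁, x₂), hfx, rfl⟩
    simp [hz]
  have hP2sum : Summable (fun x₁ : X₁ => (∑' x₂ : X₂, q₂ x₂ * ‖f (x₁, x₂)‖ ^ 2 * m₂ x₂) * m₁ x₁) := by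
    apply summable_of_finite_support
    apply (hf.image Prod.fst).subset
    intro x₁ hx₁
    simp only [Function.mem_support] at hx₁
    by_contra hmem
    apply hx₁
    have hz : ∀ x₂, f (x₁, x₂) = 0 := by
      intro x₂
      by_contra hfx
      exact hmem ⟨(x₁, x₂), hfx, rfl⟩
    simp [hz]
  rw [hedge, hqpart]
  have hrhs1 : (∑' x₂ : X₂, (1 / 2 * ∑' x₁ : X₁, ∑' y₁, b₁ x₁ y₁ *
      ‖f (x₁, x₂) - Complex.exp ((θ₁ x₁ y₁ : ℂ) * Complex.I) * f (y₁, x₂)‖ ^ 2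
      + ∑' x₁ : X₁, q₁ x₁ * ‖f (x₁, x₂)‖ ^ 2 * m₁ x₁) * m₂ x₂) =
      1 / 2 * (∑' x₂ : X₂, (∑' x₁ : X₁, ∑' y₁, b₁ x₁ y₁ *
        ‖f (x₁, x₂) - Complex.exp ((θ₁ x₁ y₁ : ℂ) * Complex.I) * f (y₁, x₂)‖ ^ 2) * m₂ x₂)
      + ∑' x₂ : X₂, (∑' x₁ : X₁, q₁ x₁ * ‖f (x₁, x₂)‖ ^ 2 * m₁ x₁) * m₂ x₂ := by
    rw [← tsum_mul_left, ← Summable.tsum_add (hD1sum.mul_left (1 / 2)) hP1sum]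
    exact tsum_congr fun x₂ => by ring
  have hrhs2 : (∑' x₁ : X₁, (1 / 2 * ∑' x₂ : X₂, ∑' y₂, b₂ x₂ y₂ *
      ‖f (x₁, x₂) - Complex.exp ((θ₂ x₂ y₂ : ℂ) * Complex.I) * f (x₁, y₂)‖ ^ 2
      + ∑' x₂ : X₂, q₂ x₂ * ‖f (x₁, x₂)‖ ^ 2 * m₂ x₂) * m₁ x₁) =
      1 / 2 * (∑' x₁ : X₁, (∑' x₂ : X₂, ∑' y₂, b₂ x₂ y₂ *
        ‖f (x₁, x₂) - Complex.exp ((θ₂ x₂ y₂ : ℂ) * Complex.I) * f (x₁, y₂)‖ ^ 2) * m₁ x₁)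
      + ∑' x₁ : X₁, (∑' x₂ : X₂, q₂ x₂ * ‖f (x₁, x₂)‖ ^ 2 * m₂ x₂) * m₁ x₁ := by
    rw [← tsum_mul_left, ← Summable.tsum_add (hD2sum.mul_left (1 / 2)) hP2sum]
    exact tsum_congr fun x₁ => by ring
  rw [hrhs1, hrhs2]
  ring

end ProductTheorems
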